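/- (Driver determined by one-step values) Let O_t be the set of pairs (Y_t, Y_{t+1}) where Y_t is the time-t solution of the BSDE with driver F and terminal value Y_{t+1} at time t+1. Then O_t uniquely determines the function (Y_t, Z_t) ↦ F(ω, t, Y_t, Z_t), up to a.s. equality, via F(ω,t,Y_t,Z_t) = Y_t - E[Y_{t+1}|F_t] where Z_t M_{t+1} = Y_{t+1} - E[Y_{t+1}|F_t]. -/

import Mathlib

open MeasureTheory

section BSDEAux

variable {Ω γ E : Type*}

private lemma bsde_meas_of_finite_fibers [MeasurableSpace γ] [MeasurableSpace E] {h : γ → E}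
    (hfin : (Set.range h).Finite) (hfib : ∀ c, MeasurableSet (h ⁻¹' {c})) : Measurable h := by
  intro B hB
  have hB' : h ⁻¹' B = ⋃ c ∈ (Set.range h ∩ B), h ⁻¹' {c} := by
    ext x
    simp only [Set.mem_preimage, Set.mem_iUnion, Set.mem_inter_iff, Set.mem_range,
      Set.mem_singleton_iff, exists_prop]
    constructor
    · intro hx; exact ⟨h x, ⟨⟨x, rfl⟩, hx⟩, rfl⟩
    · rintro ⟨c, ⟨_, hcB⟩, hc⟩; rw [hc]; exact hcB
  rw [hB']
  exact Set.Finite.measurableSet_biUnion (hfin.inter_of_left B) fun c _ => hfib c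

private lemma bsde_const_of_meas [mγ : MeasurableSpace γ] [MeasurableSpace E]
    [MeasurableSingletonClass E] {g : Ω → γ} {f : Ω → E}
    (hf : Measurable[mγ.comap g] f) {ω1 ω2 : Ω} (hg : g ω1 = g ω2) : f ω1 = f ω2 := by
  obtain ⟨B, _, hBeq⟩ := hf (MeasurableSet.singleton (f ω2))
  have h2 : ω2 ∈ g ⁻¹' B := by rw [hBeq]; exact rfl
  have h1 : ω1 ∈ g ⁻¹' B := by simpa [Set.mem_preimage, hg] using h2
  rw [hBeq] at h1; exact h1

private lemma bsde_meas_of_const [mγ : MeasurableSpace γ] [MeasurableSingletonClass γ]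
    [MeasurableSpace E] [MeasurableSingletonClass E] [Zero E]
    {g : Ω → γ} (hg : (Set.range g).Finite) {f : Ω → E}
    (hconst : ∀ ω1 ω2, g ω1 = g ω2 → f ω1 = f ω2) :
    Measurable[mγ.comap g] f := by
  classical
  set h : γ → E := fun v => if hv : ∃ ω, g ω = v then f hv.choose else 0 with hh
  have hfg : f = h ∘ g := by
    funext ω
    have hv : ∃ ω', g ω' = g ω := ⟨ω, rfl⟩
    simp only [hh, Function.comp_apply, dif_pos hv]
    exact (hconst _ _ hv.choose_spec).symm
  have hrange : (Set.range h).Finite := by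
    refine ((hg.image h).union (Set.finite_singleton 0)).subset ?_
    rintro - ⟨v, rfl⟩
    by_cases hv : ∃ ω, g ω = v
    · left
      refine ⟨v, ?_, rfl⟩
      obtain ⟨ω, rfl⟩ := hv
      exact ⟨ω, rfl⟩
    · right; simp [hh, dif_neg hv]
  have hfib : ∀ c : E, MeasurableSet (h ⁻¹' {c}) := by
    intro c
    have hsplit : h ⁻¹' {c} = ((h ⁻¹' {c}) ∩ Set.range g) ∪ ((h ⁻¹' {c}) \ Set.range g) := by
      rw [Set.inter_union_diff]
    rw [hsplit]
    refine MeasurableSet.union ((hg.inter_of_right _).measurableSet) ?_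
    by_cases hc : c = 0
    · have hdiff : (h ⁻¹' {c}) \ Set.range g = (Set.range g)ᶜ := by
        ext v
        constructor
        · rintro ⟨-, h2⟩; exact h2
        · intro hv
          have hv0 : h v = 0 := by
            have : ¬∃ ω, g ω = v := by simpa [Set.mem_range] using hv
            simp [hh, dif_neg this]
          exact ⟨by simp [Set.mem_preimage, hv0, hc], hv⟩
      rw [hdiff]; exact hg.measurableSet.compl
    · have hdiff : (h ⁻¹' {c}) \ Set.range g = ∅ := by
        ext v
        simp only [Set.mem_empty_iff_false, iff_false]
        rintro ⟨h1, h2⟩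
        have hv0 : h v = 0 := by
          have : ¬∃ ω, g ω = v := by simpa [Set.mem_range] using h2
          simp [hh, dif_neg this]
        exact hc (by rw [← Set.mem_singleton_iff.mp h1, hv0])
      rw [hdiff]; exact MeasurableSet.empty
  rw [hfg]
  exact (bsde_meas_of_finite_fibers hrange hfib).comp (Measurable.of_comap_le le_rfl)

private lemma bsde_finite_range_of_const {g : Ω → γ} (hg : (Set.range g).Finite) {f : Ω → E}
    (hconst : ∀ ω1 ω2, g ω1 = g ω2 → f ω1 = f ω2) : (Set.range f).Finite := by
  classical
  cases isEmpty_or_nonempty Ω with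
  | inl h => simp [Set.range_eq_empty]
  | inr h =>
    obtain ⟨ω0⟩ := h
    set h0 : γ → E := fun v => if hv : ∃ ω, g ω = v then f hv.choose else f ω0 with hh0
    refine (hg.image h0).subset ?_
    rintro - ⟨ω, rfl⟩
    have hv : ∃ ω', g ω' = g ω := ⟨ω, rfl⟩
    exact ⟨g ω, ⟨ω, rfl⟩, by simp only [hh0, dif_pos hv]; exact hconst _ _ hv.choose_spec⟩

private lemma bsde_bounded_of_finite_range [NormedAddCommGroup E] {f : Ω → E}
    (h : (Set.range f).Finite) : ∃ C, ∀ ω, ‖f ω‖ ≤ C := by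
  obtain ⟨C, hC⟩ := (h.image norm).bddAbove
  exact ⟨C, fun ω => hC (Set.mem_image_of_mem _ (Set.mem_range_self ω))⟩

end BSDEAux

/-- the driver is uniquely determined by the one-step values `𝔒_t`: if two
drivers (satisfying the existence theorem) generate the same one-step solution pairs
`(Y_t, Y_{t+1})`, then they agree a.s. at time `t`, and the driver is recovered by the
formula `F(ω,t,Y_t,Z_t) = Y_t - E[Y_{t+1}|𝓕 t]` where
`Y_{t+1} = Y_t - F(ω,t,Y_t,Z_t) + Z_t M_{t+1}`. -/
theorem driver_determined_by_one_step_values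
    {Ω : Type*} {m0 : MeasurableSpace Ω} {μ : Measure Ω} [IsProbabilityMeasure μ]
    {N K : ℕ} (𝓕 : Filtration ℕ m0)
    (X : ℕ → Ω → (Fin N → ℝ))
    (hXval : ∀ t ω, ∃ i : Fin N, X t ω = fun j => if j = i then (1 : ℝ) else 0)
    (h𝓕 : ∀ t, (𝓕 t : MeasurableSpace Ω)
      = MeasurableSpace.comap (fun ω (s : Fin (t + 1)) => X (s : ℕ) ω) inferInstance)
    (hXint : ∀ t, Integrable (X t) μ)
    (M : ℕ → Ω → (Fin N → ℝ))
    (hM : ∀ t, M t = X t - μ[X t | 𝓕 (t - 1)])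
    (t : ℕ)
    (F F' : Ω → ℕ → (Fin K → ℝ) → (Fin K → Fin N → ℝ) → (Fin K → ℝ))
    (hFmeas : ∀ G ∈ [F, F'], ∀ (Y : Ω → Fin K → ℝ) (Z : Ω → Fin K → Fin N → ℝ),
      StronglyMeasurable[𝓕 t] Y → StronglyMeasurable[𝓕 t] Z →
      StronglyMeasurable[𝓕 t] (fun ω => G ω t (Y ω) (Z ω)))
    (hFinv : ∀ G ∈ [F, F'], ∀ (Y : Ω → Fin K → ℝ) (Z1 Z2 : Ω → Fin K → Fin N → ℝ),
      (∀ᵐ ω ∂μ, (fun i => ∑ j, Z1 ω i j * M (t + 1) ω j)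
          = (fun i => ∑ j, Z2 ω i j * M (t + 1) ω j)) →
      ∀ᵐ ω ∂μ, G ω t (Y ω) (Z1 ω) = G ω t (Y ω) (Z2 ω))
    (hFbij : ∀ G ∈ [F, F'], ∀ Z : Ω → Fin K → Fin N → ℝ,
      ∀ᵐ ω ∂μ, Function.Bijective (fun y : Fin K → ℝ => y - G ω t y (Z ω)))
    -- F and F' generate the same one-step values 𝔒_t: for every terminal value Y_{t+1},
    -- the corresponding time-t solutions agree
    (hO : ∀ Ynext : Ω → Fin K → ℝ,
      StronglyMeasurable[𝓕 (t + 1)] Ynext → (∃ C, ∀ ω, ‖Ynext ω‖ ≤ C) →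
      ∀ (Yt : Ω → Fin K → ℝ) (Zt : Ω → Fin K → Fin N → ℝ)
        (Yt' : Ω → Fin K → ℝ) (Zt' : Ω → Fin K → Fin N → ℝ),
        StronglyMeasurable[𝓕 t] Yt → StronglyMeasurable[𝓕 t] Zt →
        StronglyMeasurable[𝓕 t] Yt' → StronglyMeasurable[𝓕 t] Zt' →
        (∀ᵐ ω ∂μ, Yt ω - F ω t (Yt ω) (Zt ω)
            + (fun i => ∑ j, Zt ω i j * M (t + 1) ω j) = Ynext ω) →
        (∀ᵐ ω ∂μ, Yt' ω - F' ω t (Yt' ω) (Zt' ω)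
            + (fun i => ∑ j, Zt' ω i j * M (t + 1) ω j) = Ynext ω) →
        Yt =ᵐ[μ] Yt') :
    -- conclusion: the driver is recovered from 𝔒_t and hence uniquely determined
    (∀ (Yt : Ω → Fin K → ℝ) (Zt : Ω → Fin K → Fin N → ℝ),
      StronglyMeasurable[𝓕 t] Yt → (∃ C, ∀ ω, ‖Yt ω‖ ≤ C) →
      StronglyMeasurable[𝓕 t] Zt → (∃ C, ∀ ω i j, |Zt ω i j| ≤ C) →
      (fun ω => F ω t (Yt ω) (Zt ω)) =ᵐ[μ]
        fun ω => Yt ω - (μ[(fun ω' => Yt ω' - F ω' t (Yt ω') (Zt ω')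
            + (fun i => ∑ j, Zt ω' i j * M (t + 1) ω' j)) | 𝓕 t]) ω) ∧
    (∀ (Yt : Ω → Fin K → ℝ) (Zt : Ω → Fin K → Fin N → ℝ),
      StronglyMeasurable[𝓕 t] Yt → (∃ C, ∀ ω, ‖Yt ω‖ ≤ C) →
      StronglyMeasurable[𝓕 t] Zt → (∃ C, ∀ ω i j, |Zt ω i j| ≤ C) →
      (fun ω => F ω t (Yt ω) (Zt ω)) =ᵐ[μ] fun ω => F' ω t (Yt ω) (Zt ω)) := by
  classical
  have hm : (𝓕 t : MeasurableSpace Ω) ≤ m0 := 𝓕.le t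
  haveI : SigmaFinite (μ.trim hm) := inferInstance
  set g : Ω → Fin (t + 1) → Fin N → ℝ := fun ω s => X (s : ℕ) ω with hgdef
  have hcomap : (𝓕 t : MeasurableSpace Ω) = MeasurableSpace.comap g inferInstance := h𝓕 t
  have hgfin : (Set.range g).Finite := by
    refine (Set.finite_range (fun c : Fin (t + 1) → Fin N =>
      fun (s : Fin (t + 1)) (j : Fin N) => if j = c s then (1 : ℝ) else 0)).subset ?_
    rintro - ⟨ω, rfl⟩
    refine ⟨fun s => (hXval (s : ℕ) ω).choose, ?_⟩
    funext s
    exact ((hXval (s : ℕ) ω).choose_spec).symm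
  -- constancy on fibers of g
  have hconstK : ∀ (f : Ω → Fin K → ℝ), StronglyMeasurable[𝓕 t] f →
      ∀ ω1 ω2, g ω1 = g ω2 → f ω1 = f ω2 := by
    intro f hf ω1 ω2 hgg
    have hmeas : Measurable[MeasurableSpace.comap g inferInstance] f := by
      rw [← hcomap]; exact hf.measurable
    exact bsde_const_of_meas hmeas hgg
  have hconstKN : ∀ (f : Ω → Fin K → Fin N → ℝ), StronglyMeasurable[𝓕 t] f →
      ∀ ω1 ω2, g ω1 = g ω2 → f ω1 = f ω2 := by
    intro f hf ω1 ω2 hgg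
    have hmeas : Measurable[MeasurableSpace.comap g inferInstance] f := by
      rw [← hcomap]; exact hf.measurable
    exact bsde_const_of_meas hmeas hgg
  -- boundedness of 𝓕 t strongly measurable functions
  have hbddK : ∀ (f : Ω → Fin K → ℝ), StronglyMeasurable[𝓕 t] f →
      ∃ C, ∀ ω, ‖f ω‖ ≤ C := fun f hf =>
    bsde_bounded_of_finite_range (bsde_finite_range_of_const hgfin (hconstK f hf))
  have hbddN : ∀ (f : Ω → Fin N → ℝ), StronglyMeasurable[𝓕 t] f →
      ∃ C, ∀ ω, ‖f ω‖ ≤ C := by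
    intro f hf
    have hmeas : Measurable[MeasurableSpace.comap g inferInstance] f := by
      rw [← hcomap]; exact hf.measurable
    exact bsde_bounded_of_finite_range (bsde_finite_range_of_const hgfin
      (fun ω1 ω2 hgg => bsde_const_of_meas hmeas hgg))
  -- basic facts about M (t+1)
  have hMt1 : M (t + 1) = X (t + 1) - μ[X (t + 1) | 𝓕 t] := by
    have := hM (t + 1); simpa using this
  have hXj_int : ∀ j : Fin N, Integrable (fun ω => X (t + 1) ω j) μ := by
    intro j
    have := (ContinuousLinearMap.proj (R := ℝ) (φ := fun _ : Fin N => ℝ) j).integrable_comp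
      (hXint (t + 1))
    simpa using this
  have hXcondj_int : ∀ j : Fin N, Integrable (fun ω => (μ[X (t + 1) | 𝓕 t]) ω j) μ := by
    intro j
    have := (ContinuousLinearMap.proj (R := ℝ) (φ := fun _ : Fin N => ℝ) j).integrable_comp
      (integrable_condExp (f := X (t + 1)) (m := 𝓕 t) (μ := μ))
    simpa using this
  have hMj_int : ∀ j : Fin N, Integrable (fun ω => M (t + 1) ω j) μ := by
    intro j
    rw [hMt1]
    exact (hXj_int j).sub (hXcondj_int j)
  -- componentwise conditional expectation
  have hproj : ∀ (f : Ω → Fin N → ℝ), Integrable f μ → ∀ j : Fin N,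
      (fun ω => (μ[f | 𝓕 t]) ω j) =ᵐ[μ] μ[fun ω => f ω j | 𝓕 t] := by
    intro f hf j
    have hLf : Integrable (fun ω => f ω j) μ := by
      have := (ContinuousLinearMap.proj (R := ℝ) (φ := fun _ : Fin N => ℝ) j).integrable_comp hf
      simpa using this
    refine ae_eq_condExp_of_forall_setIntegral_eq hm hLf ?_ ?_ ?_
    · intro s _ _
      have : Integrable (fun ω => (μ[f | 𝓕 t]) ω j) μ := by
        have := (ContinuousLinearMap.proj (R := ℝ) (φ := fun _ : Fin N => ℝ) j).integrable_comp
          (integrable_condExp (f := f) (m := 𝓕 t) (μ := μ))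
        simpa using this
      exact this.integrableOn
    · intro s hs _
      have h1 : ∫ ω in s, (μ[f | 𝓕 t]) ω j ∂μ
          = (ContinuousLinearMap.proj (R := ℝ) (φ := fun _ : Fin N => ℝ) j)
            (∫ ω in s, (μ[f | 𝓕 t]) ω ∂μ) := by
        rw [← ContinuousLinearMap.integral_comp_comm _ integrable_condExp.integrableOn]
        simp
      rw [h1, setIntegral_condExp hm hf hs,
        ← ContinuousLinearMap.integral_comp_comm _ hf.integrableOn]
      simp
    · exact ((continuous_apply j).comp_stronglyMeasurable
        stronglyMeasurable_condExp).aestronglyMeasurable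
  -- conditional expectation of the martingale increments vanishes
  have hM0 : ∀ j : Fin N, μ[fun ω => M (t + 1) ω j | 𝓕 t] =ᵐ[μ] 0 := by
    intro j
    have hcongr : (fun ω => M (t + 1) ω j)
        =ᵐ[μ] fun ω => X (t + 1) ω j - (μ[fun ω' => X (t + 1) ω' j | 𝓕 t]) ω := by
      filter_upwards [hproj (X (t + 1)) (hXint (t + 1)) j] with ω hω
      rw [hMt1]
      simp only [Pi.sub_apply]
      rw [hω]
    have h1 := condExp_congr_ae (m := 𝓕 t) (μ := μ) hcongr
    have h2 : μ[(fun ω => X (t + 1) ω j) - (μ[fun ω' => X (t + 1) ω' j | 𝓕 t]) | 𝓕 t]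
        =ᵐ[μ] μ[fun ω => X (t + 1) ω j | 𝓕 t] - μ[μ[fun ω' => X (t + 1) ω' j | 𝓕 t] | 𝓕 t] :=
      condExp_sub (hXj_int j) integrable_condExp _
    have h3 : μ[μ[fun ω' => X (t + 1) ω' j | 𝓕 t] | 𝓕 t]
        =ᵐ[μ] μ[fun ω' => X (t + 1) ω' j | 𝓕 t] := condExp_condExp_of_le le_rfl hm
    refine h1.trans (h2.trans ?_)
    filter_upwards [h3] with ω hω
    simp [Pi.sub_apply, hω]
  -- pull-out: conditional expectation of Z · M vanishes
  have hZM : ∀ (Zt : Ω → Fin K → Fin N → ℝ), StronglyMeasurable[𝓕 t] Zt →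
      ∀ (C : ℝ), (∀ ω i j, |Zt ω i j| ≤ C) → ∀ (i : Fin K) (j : Fin N),
      Integrable (fun ω => Zt ω i j * M (t + 1) ω j) μ ∧
      μ[fun ω => Zt ω i j * M (t + 1) ω j | 𝓕 t] =ᵐ[μ] 0 := by
    intro Zt hZt C hC i j
    have hZsm : StronglyMeasurable[𝓕 t] fun ω => Zt ω i j :=
      (continuous_apply j).comp_stronglyMeasurable
        ((continuous_apply i).comp_stronglyMeasurable hZt)
    have hint : Integrable (fun ω => Zt ω i j * M (t + 1) ω j) μ :=
      (hMj_int j).bdd_mul ((hZsm.mono hm).aestronglyMeasurable)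
        (Filter.Eventually.of_forall fun ω => by simpa [Real.norm_eq_abs] using hC ω i j)
    refine ⟨hint, ?_⟩
    have hmulrw : (fun ω => Zt ω i j * M (t + 1) ω j)
        = (fun ω => Zt ω i j) * (fun ω => M (t + 1) ω j) := rfl
    have hpull := condExp_mul_of_stronglyMeasurable_left (μ := μ) hZsm
      (by rw [← hmulrw]; exact hint) (hMj_int j)
    rw [hmulrw]
    refine hpull.trans ?_
    filter_upwards [hM0 j] with ω hω
    simp [Pi.mul_apply, hω]
  have hFmem : F ∈ [F, F'] := List.mem_cons_self
  have hF'mem : F' ∈ [F, F'] := by simp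
  have hcore : ∀ (Yt : Ω → Fin K → ℝ) (Zt : Ω → Fin K → Fin N → ℝ),
      StronglyMeasurable[𝓕 t] Yt → StronglyMeasurable[𝓕 t] Zt →
      (∃ C, ∀ ω i j, |Zt ω i j| ≤ C) →
      StronglyMeasurable[𝓕 (t + 1)]
        (fun ω => Yt ω - F ω t (Yt ω) (Zt ω) + fun i => ∑ j, Zt ω i j * M (t + 1) ω j) ∧
      (∃ C, ∀ ω, ‖Yt ω - F ω t (Yt ω) (Zt ω) + fun i => ∑ j, Zt ω i j * M (t + 1) ω j‖ ≤ C) ∧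
      μ[(fun ω => Yt ω - F ω t (Yt ω) (Zt ω) + fun i => ∑ j, Zt ω i j * M (t + 1) ω j) | 𝓕 t]
        =ᵐ[μ] fun ω => Yt ω - F ω t (Yt ω) (Zt ω) := by
    intro Yt Zt hYt hZt hZtb
    obtain ⟨CZ, hCZ⟩ := hZtb
    set FA := fun ω => Yt ω - F ω t (Yt ω) (Zt ω) with hFAdef
    set v := fun ω => (fun i : Fin K => ∑ j, Zt ω i j * M (t + 1) ω j) with hvdef
    have hFA_sm : StronglyMeasurable[𝓕 t] FA := hYt.sub (hFmeas F hFmem Yt Zt hYt hZt)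
    obtain ⟨CA, hCA⟩ := hbddK FA hFA_sm
    have hFA_int : Integrable FA μ :=
      Integrable.mono' (integrable_const CA) ((hFA_sm.mono hm).aestronglyMeasurable)
        (Filter.Eventually.of_forall hCA)
    have hXt1_sm : StronglyMeasurable[𝓕 (t + 1)] (X (t + 1)) := by
      refine Measurable.stronglyMeasurable ?_
      rw [measurable_iff_comap_le, h𝓕 (t + 1)]
      have hXrw : X (t + 1) = (fun p : Fin (t + 2) → Fin N → ℝ => p ⟨t + 1, Nat.lt_succ_self _⟩)
          ∘ (fun ω (s : Fin (t + 2)) => X (s : ℕ) ω) := rfl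
      rw [hXrw, ← MeasurableSpace.comap_comp]
      exact MeasurableSpace.comap_mono (measurable_iff_comap_le.mp
        (measurable_pi_apply (X := fun _ : Fin (t + 2) => Fin N → ℝ) _))
    have hM_sm : StronglyMeasurable[𝓕 (t + 1)] (M (t + 1)) := by
      rw [hMt1]
      exact hXt1_sm.sub (stronglyMeasurable_condExp.mono (𝓕.mono (Nat.le_succ t)))
    have hφ : Continuous (fun p : (Fin K → Fin N → ℝ) × (Fin N → ℝ) =>
        (fun i : Fin K => ∑ j, p.1 i j * p.2 j)) := by
      refine continuous_pi fun i => ?_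
      refine continuous_finset_sum _ fun j _ => Continuous.mul ?_ ?_
      · exact (continuous_apply j).comp ((continuous_apply i).comp continuous_fst)
      · exact (continuous_apply j).comp continuous_snd
    have hv_sm : StronglyMeasurable[𝓕 (t + 1)] v :=
      hφ.comp_stronglyMeasurable ((hZt.mono (𝓕.mono (Nat.le_succ t))).prodMk hM_sm)
    obtain ⟨CD, hCD⟩ := hbddN (μ[X (t + 1) | 𝓕 t]) stronglyMeasurable_condExp
    have hMb : ∀ ω j, |M (t + 1) ω j| ≤ 1 + max CD 0 := by
      intro ω j
      rw [hMt1]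
      have h1 : |X (t + 1) ω j| ≤ 1 := by
        obtain ⟨i, hi⟩ := hXval (t + 1) ω
        rw [hi]
        by_cases h : j = i <;> simp [h]
      have h2 : |(μ[X (t + 1) | 𝓕 t]) ω j| ≤ max CD 0 := by
        have hle := norm_le_pi_norm ((μ[X (t + 1) | 𝓕 t]) ω) j
        rw [Real.norm_eq_abs] at hle
        exact hle.trans ((hCD ω).trans (le_max_left _ _))
      calc |(X (t + 1) - μ[X (t + 1) | 𝓕 t]) ω j|
          = |X (t + 1) ω j - (μ[X (t + 1) | 𝓕 t]) ω j| := rfl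
        _ ≤ |X (t + 1) ω j| + |(μ[X (t + 1) | 𝓕 t]) ω j| := by
            simpa [Real.norm_eq_abs] using
              norm_sub_le (X (t + 1) ω j) ((μ[X (t + 1) | 𝓕 t]) ω j)
        _ ≤ 1 + max CD 0 := add_le_add h1 h2
    have hv_bdd : ∀ ω, ‖v ω‖ ≤ (N : ℝ) * (max CZ 0 * (1 + max CD 0)) := by
      intro ω
      have hnn : (0 : ℝ) ≤ (N : ℝ) * (max CZ 0 * (1 + max CD 0)) := by positivity
      rw [pi_norm_le_iff_of_nonneg hnn]
      intro i
      rw [Real.norm_eq_abs]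
      calc |∑ j, Zt ω i j * M (t + 1) ω j| ≤ ∑ j, |Zt ω i j * M (t + 1) ω j| :=
            Finset.abs_sum_le_sum_abs _ _
        _ ≤ ∑ _j : Fin N, max CZ 0 * (1 + max CD 0) := by
            refine Finset.sum_le_sum fun j _ => ?_
            rw [abs_mul]
            exact mul_le_mul ((hCZ ω i j).trans (le_max_left _ _)) (hMb ω j) (abs_nonneg _)
              (le_max_right _ _)
        _ = (N : ℝ) * (max CZ 0 * (1 + max CD 0)) := by
            simp [Finset.sum_const, Finset.card_univ, nsmul_eq_mul]
    have hv_int : Integrable v μ :=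
      Integrable.mono' (integrable_const _) ((hv_sm.mono (𝓕.le (t + 1))).aestronglyMeasurable)
        (Filter.Eventually.of_forall hv_bdd)
    refine ⟨?_, ?_, ?_⟩
    · exact ((hFA_sm.mono (𝓕.mono (Nat.le_succ t))).add hv_sm : _)
    · exact ⟨CA + (N : ℝ) * (max CZ 0 * (1 + max CD 0)),
        fun ω => (norm_add_le (FA ω) (v ω)).trans (add_le_add (hCA ω) (hv_bdd ω))⟩
    · refine (ae_eq_condExp_of_forall_setIntegral_eq hm (hFA_int.add hv_int)
        (fun s _ _ => hFA_int.integrableOn) ?_ hFA_sm.aestronglyMeasurable).symm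
      intro s hs _
      have hsm0 : MeasurableSet s := hm s hs
      have hvzero : ∫ ω in s, v ω ∂μ = 0 := by
        have hcomp : ∀ i : Fin K, (∫ ω in s, v ω ∂μ) i = 0 := by
          intro i
          have h1 : (ContinuousLinearMap.proj (R := ℝ) (φ := fun _ : Fin K => ℝ) i)
              (∫ ω in s, v ω ∂μ) = ∫ ω in s, (∑ j, Zt ω i j * M (t + 1) ω j) ∂μ := by
            rw [← ContinuousLinearMap.integral_comp_comm _ hv_int.integrableOn]
            simp [hvdef]
          have h2 : (∫ ω in s, v ω ∂μ) i = ∫ ω in s, (∑ j, Zt ω i j * M (t + 1) ω j) ∂μ := by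
            simpa using h1
          rw [h2, integral_finset_sum _ (fun j _ => ((hZM Zt hZt CZ hCZ i j).1).integrableOn)]
          refine Finset.sum_eq_zero fun j _ => ?_
          rw [← setIntegral_condExp hm (hZM Zt hZt CZ hCZ i j).1 hs]
          rw [setIntegral_congr_ae hsm0 (((hZM Zt hZt CZ hCZ i j).2).mono fun ω hω _ => hω)]
          simp
        funext i
        simpa using hcomp i
      have hadd : ∫ ω in s, (FA ω + v ω) ∂μ = (∫ ω in s, FA ω ∂μ) + ∫ ω in s, v ω ∂μ :=
        integral_add hFA_int.integrableOn hv_int.integrableOn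
      calc ∫ ω in s, FA ω ∂μ = (∫ ω in s, FA ω ∂μ) + ∫ ω in s, v ω ∂μ := by
            rw [hvzero, add_zero]
        _ = ∫ ω in s, (FA ω + v ω) ∂μ := hadd.symm
  refine ⟨?_, ?_⟩
  · intro Yt Zt hYt _ hZt hZtb
    obtain ⟨-, -, hcond⟩ := hcore Yt Zt hYt hZt hZtb
    filter_upwards [hcond] with ω hω
    rw [hω]
    exact (sub_sub_cancel _ _).symm
  · intro Yt Zt hYt hYtb hZt hZtb
    obtain ⟨hYnext_sm, hYnext_bdd, -⟩ := hcore Yt Zt hYt hZt hZtb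
    set Yt' := fun ω => Function.invFun (fun y : Fin K → ℝ => y - F' ω t y (Zt ω))
      (Yt ω - F ω t (Yt ω) (Zt ω)) with hYt'def
    have hFA_sm : StronglyMeasurable[𝓕 t] (fun ω => Yt ω - F ω t (Yt ω) (Zt ω)) :=
      hYt.sub (hFmeas F hFmem Yt Zt hYt hZt)
    have hconstYt' : ∀ ω1 ω2, g ω1 = g ω2 → Yt' ω1 = Yt' ω2 := by
      intro ω1 ω2 hgg
      have hAc := hconstK _ hFA_sm ω1 ω2 hgg
      have hF'c : ∀ y : Fin K → ℝ, F' ω1 t y (Zt ω1) = F' ω2 t y (Zt ω2) := by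
        intro y
        exact hconstK (fun ω => F' ω t y (Zt ω))
          (hFmeas F' hF'mem (fun _ => y) Zt stronglyMeasurable_const hZt) ω1 ω2 hgg
      simp only [hYt'def]
      rw [hAc, show (fun y : Fin K → ℝ => y - F' ω1 t y (Zt ω1))
          = fun y : Fin K → ℝ => y - F' ω2 t y (Zt ω2) from funext fun y => by rw [hF'c y]]
    have hYt'_sm : StronglyMeasurable[𝓕 t] Yt' := by
      refine Measurable.stronglyMeasurable ?_
      rw [hcomap]
      exact bsde_meas_of_const hgfin hconstYt'
    have heq' : ∀ᵐ ω ∂μ, Yt' ω - F' ω t (Yt' ω) (Zt ω)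
        + (fun i => ∑ j, Zt ω i j * M (t + 1) ω j)
        = Yt ω - F ω t (Yt ω) (Zt ω) + fun i => ∑ j, Zt ω i j * M (t + 1) ω j := by
      filter_upwards [hFbij F' hF'mem Zt] with ω hbij
      have h1 := Function.invFun_eq (f := fun y : Fin K → ℝ => y - F' ω t y (Zt ω))
        (hbij.surjective (Yt ω - F ω t (Yt ω) (Zt ω)))
      have h1' : Yt' ω - F' ω t (Yt' ω) (Zt ω) = Yt ω - F ω t (Yt ω) (Zt ω) := h1
      rw [h1']
    have hYY' := hO _ hYnext_sm hYnext_bdd Yt Zt Yt' Zt hYt hZt hYt'_sm hZt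
      (Filter.Eventually.of_forall fun ω => rfl) heq'
    filter_upwards [hYY', heq'] with ω h1 h2
    have h3 : Yt' ω - F' ω t (Yt' ω) (Zt ω) = Yt ω - F ω t (Yt ω) (Zt ω) :=
      add_right_cancel h2
    rw [← h1] at h3
    exact (sub_right_injective h3).symm
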